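/- The compact set Ω = {I ∈ ℝ^n : 0 ≤ I_i ≤ N̄_i for all i} is positively invariant for the SIS system: every solution I : [0,∞) → ℝ^n of I'(t) = G(I(t)) with I(0) ∈ Ω satisfies I(t) ∈ Ω for all t ≥ 0. -/

import Mathlib

open Matrix Filter Topology

noncomputable section

/-- The spectral radius of a real square matrix: the supremum of the norms of its
complex eigenvalues. -/
def specRad {n : ℕ} (A : Matrix (Fin n) (Fin n) ℝ) : ℝ :=
  sSup {r : ℝ | ∃ μ ∈ spectrum ℂ (A.map (Complex.ofReal)), ‖μ‖ = r}

/-- Irreducibility of a square matrix: no proper nonempty subset of indices is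
invariant, i.e. from every such subset there is a nonzero entry leading outside of it. -/
def MatIrred {n : ℕ} (A : Matrix (Fin n) (Fin n) ℝ) : Prop :=
  ∀ S : Set (Fin n), S.Nonempty → S ≠ Set.univ → ∃ i ∈ S, ∃ j ∈ Sᶜ, A i j ≠ 0

/-- N̄ᵢ = bᵢ/dᵢ, the asymptotic population of patch i. -/
def Nbar {n : ℕ} (b d : Fin n → ℝ) : Fin n → ℝ := fun i => b i / d i

/-- Ñⱼ = ∑ₖ p_{kj} N̄ₖ, the effective population of patch j. -/
def Ntil {n : ℕ} (P : Matrix (Fin n) (Fin n) ℝ) (b d : Fin n → ℝ) : Fin n → ℝ :=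
  fun j => ∑ k, P k j * Nbar b d k

/-- M = P·diag(β)·diag(Ñ)⁻¹·Pᵀ. -/
def Mmat {n : ℕ} (P : Matrix (Fin n) (Fin n) ℝ) (β b d : Fin n → ℝ) :
    Matrix (Fin n) (Fin n) ℝ :=
  P * Matrix.diagonal β * Matrix.diagonal (fun j => (Ntil P b d j)⁻¹) * Pᵀ

/-- F = diag(N̄)·M. -/
def Fmat {n : ℕ} (P : Matrix (Fin n) (Fin n) ℝ) (β b d : Fin n → ℝ) :
    Matrix (Fin n) (Fin n) ℝ :=
  Matrix.diagonal (Nbar b d) * Mmat P β b d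

/-- V = −diag(dᵢ + γᵢ). -/
def Vmat {n : ℕ} (d γ : Fin n → ℝ) : Matrix (Fin n) (Fin n) ℝ :=
  -Matrix.diagonal (fun i => d i + γ i)

/-- The SIS vector field G(I) = diag(N̄ − I)·M·I + V·I, written componentwise. -/
def Gfield {n : ℕ} (P : Matrix (Fin n) (Fin n) ℝ) (β b d γ : Fin n → ℝ)
    (I : Fin n → ℝ) : Fin n → ℝ :=
  fun i => (Nbar b d i - I i) * (Mmat P β b d).mulVec I i - (d i + γ i) * I i

/-- Ω = {I : 0 ≤ Iᵢ ≤ N̄ᵢ for all i}. -/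
def OmegaSet {n : ℕ} (b d : Fin n → ℝ) : Set (Fin n → ℝ) :=
  {I | ∀ i, 0 ≤ I i ∧ I i ≤ Nbar b d i}

/-- The basic reproduction number R₀ = ρ(−F·V⁻¹). -/
def R0 {n : ℕ} (P : Matrix (Fin n) (Fin n) ℝ) (β b d γ : Fin n → ℝ) : ℝ :=
  specRad (-(Fmat P β b d * (Vmat d γ)⁻¹))

/-- `I : ℝ → ℝⁿ` is a solution of the SIS system on [0,∞). -/
def IsSol {n : ℕ} (P : Matrix (Fin n) (Fin n) ℝ) (β b d γ : Fin n → ℝ)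
    (I : ℝ → Fin n → ℝ) : Prop :=
  ∀ t ∈ Set.Ici (0 : ℝ), HasDerivWithinAt I (Gfield P β b d γ (I t)) (Set.Ici 0) t

/-- Auxiliary: clamping to `[0, hi]` moves a point no farther than any point of `[0, hi]`. -/
lemma clamp_abs_le {x a hi : ℝ} (h1 : 0 ≤ a) (h2 : a ≤ hi) :
    |x - max 0 (min x hi)| ≤ |x - a| := by
  rcases le_or_gt x 0 with hx | hx
  · rw [min_eq_left (hx.trans (h1.trans h2)), max_eq_left hx]
    rw [abs_of_nonpos (by linarith : x - 0 ≤ 0), abs_of_nonpos (by linarith : x - a ≤ 0)]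
    linarith
  · rcases le_or_gt x hi with hxh | hxh
    · rw [min_eq_left hxh, max_eq_right hx.le]
      simp [abs_nonneg]
    · rw [min_eq_right hxh.le, max_eq_right (h1.trans h2)]
      rw [abs_of_nonneg (by linarith : (0:ℝ) ≤ x - hi), abs_of_nonneg (by linarith : (0:ℝ) ≤ x - a)]
      linarith

/-- the compact set Ω is positively invariant for the SIS system. -/
theorem sis_omega_positively_invariant
    {n : ℕ} (hn : 1 ≤ n) (b d γ β : Fin n → ℝ) (P : Matrix (Fin n) (Fin n) ℝ)
    (hb : ∀ i, 0 < b i) (hd : ∀ i, 0 < d i) (hγ : ∀ i, 0 ≤ γ i) (hβ : ∀ j, 0 < β j)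
    (hP0 : ∀ i j, 0 ≤ P i j) (hP1 : ∀ i j, P i j ≤ 1)
    (hrow : ∀ i, ∑ j, P i j = 1) (hcol : ∀ j, ∃ k, 0 < P k j) :
    ∀ I : ℝ → Fin n → ℝ, IsSol P β b d γ I → I 0 ∈ OmegaSet b d →
      ∀ t ≥ (0 : ℝ), I t ∈ OmegaSet b d := by
  classical
  intro I hsol h0 t ht
  set Nb := Nbar b d with hNbdef
  have hNb : ∀ i, 0 < Nb i := fun i => div_pos (hb i) (hd i)
  set M := Mmat P β b d with hMdef
  have hNt : ∀ j, 0 < Ntil P b d j := by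
    intro j
    obtain ⟨k, hk⟩ := hcol j
    exact Finset.sum_pos' (fun l _ => mul_nonneg (hP0 l j) (hNb l).le)
      ⟨k, Finset.mem_univ k, mul_pos hk (hNb k)⟩
  have hM : ∀ i j, 0 ≤ M i j := by
    intro i j
    have hMe : M i j = ∑ k, P i k * β k * (Ntil P b d k)⁻¹ * P j k := by
      rw [hMdef, Mmat, Matrix.mul_apply]
      refine Finset.sum_congr rfl fun k _ => ?_
      rw [Matrix.transpose_apply, Matrix.mul_diagonal, Matrix.mul_diagonal]
    rw [hMe]
    exact Finset.sum_nonneg fun k _ => mul_nonneg (mul_nonneg (mul_nonneg (hP0 i k)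
      (hβ k).le) (inv_nonneg.mpr (hNt k).le)) (hP0 j k)
  set G := Gfield P β b d γ with hGdef
  have hGapp : ∀ y i, G y i = (Nb i - y i) * M.mulVec y i - (d i + γ i) * y i := fun y i => rfl
  have hmv : ∀ (y : Fin n → ℝ), (∀ i, 0 ≤ y i) → ∀ i, 0 ≤ M.mulVec y i := by
    intro y hy i
    simp only [Matrix.mulVec, dotProduct]
    exact Finset.sum_nonneg fun j _ => mul_nonneg (hM i j) (hy j)
  -- the clamping map onto Ω
  set cl : (Fin n → ℝ) → (Fin n → ℝ) := fun x i => max 0 (min (x i) (Nb i)) with hcldef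
  have hclO : ∀ x, cl x ∈ OmegaSet b d := by
    intro x i
    exact ⟨le_max_left _ _, max_le (hNb i).le (min_le_right _ _)⟩
  have hclid : ∀ x, x ∈ OmegaSet b d → cl x = x := by
    intro x hx; funext i
    simp only [hcldef]
    rw [min_eq_left (hx i).2, max_eq_right (hx i).1]
  have hclnear : ∀ x y, y ∈ OmegaSet b d → ‖x - cl x‖ ≤ ‖x - y‖ := by
    intro x y hy
    rw [pi_norm_le_iff_of_nonneg (norm_nonneg _)]
    intro i
    calc ‖(x - cl x) i‖ = |x i - max 0 (min (x i) (Nb i))| := rfl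
      _ ≤ |x i - y i| := clamp_abs_le (hy i).1 (hy i).2
      _ ≤ ‖x - y‖ := by simpa using norm_le_pi_norm (x - y) i
  have hclbdd : ∀ x, ‖cl x‖ ≤ ‖Nb‖ := by
    intro x
    rw [pi_norm_le_iff_of_nonneg (norm_nonneg _)]
    intro i
    have h1 : (0:ℝ) ≤ cl x i := le_max_left _ _
    have h2 : cl x i ≤ Nb i := max_le (hNb i).le (min_le_right _ _)
    calc ‖cl x i‖ = |cl x i| := rfl
      _ ≤ Nb i := by rw [abs_of_nonneg h1]; exact h2
      _ ≤ ‖Nb‖ := (le_abs_self _).trans (by simpa using norm_le_pi_norm Nb i)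
  -- smoothness and Lipschitz bound for G on a big ball
  have hproj : ∀ i : Fin n, ContDiff ℝ 1 (fun x : Fin n → ℝ => x i) := by
    intro i
    exact (ContinuousLinearMap.proj i : (Fin n → ℝ) →L[ℝ] ℝ).contDiff
  have hGc : ContDiff ℝ 1 G := by
    rw [hGdef]
    apply contDiff_pi.mpr
    intro i
    have hmvC : ContDiff ℝ 1 (fun x : Fin n → ℝ => (Mmat P β b d).mulVec x i) := by
      have he : (fun x : Fin n → ℝ => (Mmat P β b d).mulVec x i)
          = fun x => ∑ j, Mmat P β b d i j * x j := by
        funext x; simp [Matrix.mulVec, dotProduct]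
      rw [he]
      exact ContDiff.sum fun j _ => contDiff_const.mul (hproj j)
    exact ((contDiff_const.sub (hproj i)).mul hmvC).sub (contDiff_const.mul (hproj i))
  have hIcont : ContinuousOn I (Set.Ici (0:ℝ)) := fun s hs => (hsol s hs).continuousWithinAt
  obtain ⟨C, hC⟩ := (isCompact_Icc : IsCompact (Set.Icc (0:ℝ) t)).exists_bound_of_continuousOn
    (hIcont.mono Set.Icc_subset_Ici_self)
  set R := max C ‖Nb‖ with hRdef
  set S := Metric.closedBall (0 : Fin n → ℝ) R with hSdef
  have hIS : ∀ s ∈ Set.Icc (0:ℝ) t, I s ∈ S := by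
    intro s hs
    rw [hSdef, Metric.mem_closedBall, dist_zero_right]
    exact (hC s hs).trans (le_max_left _ _)
  have hclS : ∀ x, cl x ∈ S := by
    intro x
    rw [hSdef, Metric.mem_closedBall, dist_zero_right]
    exact (hclbdd x).trans (le_max_right _ _)
  obtain ⟨K0, hK0⟩ := (isCompact_closedBall (0 : Fin n → ℝ) R).exists_bound_of_continuousOn
    ((hGc.continuous_fderiv one_ne_zero).continuousOn)
  set K := max K0 0 with hKdef
  have hKnn : (0:ℝ) ≤ K := le_max_right _ _
  have hLip : ∀ a ∈ S, ∀ a' ∈ S, ‖G a - G a'‖ ≤ K * ‖a - a'‖ := by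
    intro a ha a' ha'
    exact (convex_closedBall (0 : Fin n → ℝ) R).norm_image_sub_le_of_norm_fderiv_le
      (fun z _ => (hGc.differentiable one_ne_zero) z)
      (fun z hz => (hK0 z hz).trans (le_max_left _ _)) ha' ha
  -- the distance-to-Ω function along the solution
  have hclcont : Continuous cl :=
    continuous_pi fun i => continuous_const.max ((continuous_apply i).min continuous_const)
  set u : ℝ → ℝ := fun s => ‖I s - cl (I s)‖ with hudef
  have hucont : ContinuousOn u (Set.Icc (0:ℝ) t) := by
    have h1 : ContinuousOn I (Set.Icc (0:ℝ) t) := hIcont.mono Set.Icc_subset_Ici_self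
    exact (h1.sub (hclcont.comp_continuousOn h1)).norm
  have hu0 : u 0 ≤ 0 := by
    rw [hudef]
    simp [hclid _ h0]
  have hkey : ∀ x ∈ Set.Icc (0:ℝ) t, u x ≤ gronwallBound 0 K 0 (x - 0) := by
    apply le_gronwallBound_of_liminf_deriv_right_le (f' := fun s => K * u s) hucont _ hu0
      (fun x _ => by simp)
    intro x hx r hr
    have hx0 : (0:ℝ) ≤ x := hx.1
    set y := cl (I x) with hydef
    have hyO : y ∈ OmegaSet b d := hclO _
    have hxS : I x ∈ S := hIS x ⟨hx.1, hx.2.le⟩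
    have hyS : y ∈ S := hclS _
    have hGlip : ‖G (I x) - G y‖ ≤ K * u x := hLip _ hxS _ hyS
    set c := r - K * u x with hcdef
    have hcpos : 0 < c := sub_pos.mpr hr
    -- subtangency: for small h ≥ 0, y + h • G y stays in Ω
    have hsub : ∀ᶠ h in 𝓝[Set.Ici (0:ℝ)] 0, y + h • G y ∈ OmegaSet b d := by
      have hmem : ∀ h : ℝ, (y + h • G y ∈ OmegaSet b d) ↔
          ∀ i, 0 ≤ y i + h * G y i ∧ y i + h * G y i ≤ Nb i := fun h => Iff.rfl
      simp only [hmem]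
      rw [eventually_all]
      intro i
      have hyO1 := (hyO i).1
      have hyO2 := (hyO i).2
      have hlow : ∀ᶠ h in 𝓝[Set.Ici (0:ℝ)] 0, 0 ≤ y i + h * G y i := by
        rcases eq_or_lt_of_le hyO1 with h0i | h0i
        · have hGi : 0 ≤ G y i := by
            rw [hGapp, ← h0i]
            have := hmv y (fun j => (hyO j).1) i
            nlinarith [hNb i]
          filter_upwards [eventually_mem_nhdsWithin] with h hh
          have : (0:ℝ) ≤ h * G y i := mul_nonneg hh hGi
          linarith
        · have hden : (0:ℝ) < |G y i| + 1 := by positivity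
          have hmem2 : ∀ᶠ h in 𝓝 (0:ℝ), h < y i / (|G y i| + 1) :=
            Filter.Tendsto.eventually_lt_const (div_pos h0i hden) tendsto_id
          filter_upwards [hmem2.filter_mono nhdsWithin_le_nhds,
            eventually_mem_nhdsWithin] with h hh hh0
          have h1 : h * (|G y i| + 1) ≤ y i := by
            rw [← le_div_iff₀ hden]; exact hh.le
          nlinarith [neg_abs_le (G y i), mul_le_mul_of_nonneg_left (neg_abs_le (G y i)) hh0,
            abs_nonneg (G y i)]
      have hupp : ∀ᶠ h in 𝓝[Set.Ici (0:ℝ)] 0, y i + h * G y i ≤ Nb i := by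
        rcases eq_or_lt_of_le hyO2 with hNi | hNi
        · have hGi : G y i ≤ 0 := by
            rw [hGapp, hNi]
            have h1 : (0:ℝ) ≤ (d i + γ i) * Nb i :=
              mul_nonneg (by linarith [hd i, hγ i]) (hNb i).le
            nlinarith
          filter_upwards [eventually_mem_nhdsWithin] with h hh
          have : h * G y i ≤ 0 := mul_nonpos_of_nonneg_of_nonpos hh hGi
          linarith
        · have hden : (0:ℝ) < |G y i| + 1 := by positivity
          have hmem2 : ∀ᶠ h in 𝓝 (0:ℝ), h < (Nb i - y i) / (|G y i| + 1) :=
            Filter.Tendsto.eventually_lt_const (div_pos (by linarith) hden) tendsto_id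
          filter_upwards [hmem2.filter_mono nhdsWithin_le_nhds,
            eventually_mem_nhdsWithin] with h hh hh0
          have h1 : h * (|G y i| + 1) ≤ Nb i - y i := by
            rw [← le_div_iff₀ hden]; exact hh.le
          nlinarith [le_abs_self (G y i), mul_le_mul_of_nonneg_left (le_abs_self (G y i)) hh0,
            abs_nonneg (G y i)]
      exact hlow.and hupp
    have htend : Tendsto (fun z => z - x) (𝓝[>] x) (𝓝[Set.Ici (0:ℝ)] 0) := by
      rw [tendsto_nhdsWithin_iff]
      constructor
      · have h1 : Tendsto (fun z : ℝ => z - x) (𝓝 x) (𝓝 (x - x)) :=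
          (continuous_id.sub continuous_const).tendsto x
        rw [sub_self] at h1
        exact h1.mono_left nhdsWithin_le_nhds
      · filter_upwards [eventually_mem_nhdsWithin] with z hz
        exact sub_nonneg.mpr (le_of_lt (Set.mem_Ioi.mp hz))
    have hsub' : ∀ᶠ z in 𝓝[>] x, y + (z - x) • G y ∈ OmegaSet b d := htend.eventually hsub
    have hder := hsol x hx0
    rw [hasDerivWithinAt_iff_isLittleO] at hder
    have hoo : ∀ᶠ z in 𝓝[Set.Ici (0:ℝ)] x,
        ‖I z - I x - (z - x) • G (I x)‖ ≤ c/2 * ‖z - x‖ := hder.def (half_pos hcpos)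
    have hmono : 𝓝[>] x ≤ 𝓝[Set.Ici (0:ℝ)] x :=
      nhdsWithin_mono x (fun z hz => le_trans hx0 (le_of_lt hz))
    apply Filter.Eventually.frequently
    filter_upwards [hsub', hoo.filter_mono hmono, eventually_mem_nhdsWithin] with z hzO hzo hzx
    have hzx' : 0 < z - x := sub_pos.mpr hzx
    have h1 : u z ≤ ‖I z - (y + (z - x) • G y)‖ := hclnear _ _ hzO
    have h2 : ‖I z - (y + (z - x) • G y)‖ ≤ c/2 * (z - x) + u x + (z - x) * (K * u x) := by
      have he : I z - (y + (z - x) • G y) =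
          (I z - I x - (z - x) • G (I x)) + (I x - y) + (z - x) • (G (I x) - G y) := by
        rw [smul_sub]; abel
      rw [he]
      have hn3 := norm_add₃_le (a := I z - I x - (z - x) • G (I x)) (b := I x - y)
        (c := (z - x) • (G (I x) - G y))
      have h3 : ‖(z - x) • (G (I x) - G y)‖ = (z - x) * ‖G (I x) - G y‖ := by
        rw [norm_smul, Real.norm_of_nonneg hzx'.le]
      have hz' : ‖z - x‖ = z - x := Real.norm_of_nonneg hzx'.le
      rw [hz'] at hzo
      have h4 : (z - x) * ‖G (I x) - G y‖ ≤ (z - x) * (K * u x) :=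
        mul_le_mul_of_nonneg_left hGlip hzx'.le
      have h5 : ‖I x - y‖ = u x := rfl
      calc ‖I z - I x - (z - x) • G (I x) + (I x - y) + (z - x) • (G (I x) - G y)‖
          ≤ ‖I z - I x - (z - x) • G (I x)‖ + ‖I x - y‖ + ‖(z - x) • (G (I x) - G y)‖ := hn3
        _ ≤ c/2 * (z - x) + u x + (z - x) * (K * u x) := by
            rw [h3, h5]; linarith
    have h6 : u z - u x ≤ (z - x) * (c/2 + K * u x) := by nlinarith
    have h7 : (z - x)⁻¹ * (u z - u x) ≤ c/2 + K * u x := by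
      rw [inv_mul_le_iff₀ hzx']
      linarith [h6, mul_comm (z - x) (c/2 + K * u x)]
    have h8 : c/2 + K * u x < r := by
      rw [hcdef]; linarith
    linarith
  have hut : u t ≤ 0 := by
    have := hkey t ⟨ht, le_rfl⟩
    rwa [gronwallBound_ε0_δ0] at this
  have hue : u t = 0 := le_antisymm hut (norm_nonneg _)
  have hIt : I t = cl (I t) := by
    have := norm_sub_eq_zero_iff.mp hue
    exact this
  rw [hIt]
  exact hclO _
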